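/- Let f be a Boolean function computed by a DNF with f(0^n) = 0, non-redundant terms, pairwise disjoint positive-variable sets (block property), and with maximum block sensitivity attained at 0^n (normalized). Then bs(f) ≤ 4·s(f)^2. -/

import Mathlib

open Finset

variable {ι : Type*} [Fintype ι] [DecidableEq ι]

/-- Flip one coordinate of a Boolean input. -/
def bflip (x : ι → Bool) (i : ι) : ι → Bool := Function.update x i (!x i)

/-- Flip a block (set) of coordinates of a Boolean input. -/
def bflipS (x : ι → Bool) (B : Finset ι) : ι → Bool := fun j => if j ∈ B then !x j else x j

/-- Sensitivity of `f` at `x`. -/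
def sensAt (f : (ι → Bool) → Bool) (x : ι → Bool) : ℕ :=
  (univ.filter fun i => f (bflip x i) ≠ f x).card

/-- Sensitivity of `f`. -/
def sens (f : (ι → Bool) → Bool) : ℕ := univ.sup (sensAt f)

/-- 0-sensitivity of `f`. -/
def sens0 (f : (ι → Bool) → Bool) : ℕ := (univ.filter fun x => f x = false).sup (sensAt f)

/-- 1-sensitivity of `f`. -/
def sens1 (f : (ι → Bool) → Bool) : ℕ := (univ.filter fun x => f x = true).sup (sensAt f)

/-- Block sensitivity of `f` at `x`: the largest number of pairwise disjoint
sensitive blocks. -/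
noncomputable def bsAt (f : (ι → Bool) → Bool) (x : ι → Bool) : ℕ :=
  sSup {k | ∃ B : Fin k → Finset ι, (∀ i j, i ≠ j → Disjoint (B i) (B j)) ∧
    ∀ j, f (bflipS x (B j)) ≠ f x}

/-- Block sensitivity of `f`. -/
noncomputable def bs (f : (ι → Bool) → Bool) : ℕ := univ.sup (bsAt f)

/-- 0-block sensitivity of `f`. -/
noncomputable def bs0 (f : (ι → Bool) → Bool) : ℕ := (univ.filter fun x => f x = false).sup (bsAt f)

/-- A DNF term, given by its positive variable set `t.1` and negative variable
set `t.2`, is true on `x`. -/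
def TermTrue {n : ℕ} (t : Finset (Fin n) × Finset (Fin n)) (x : Fin n → Bool) : Prop :=
  (∀ j ∈ t.1, x j = true) ∧ (∀ j ∈ t.2, x j = false)

/-! ### Auxiliary definitions and lemmas -/

set_option linter.unusedSectionVars false

/-- Indicator input of a finite set. -/
def indSet (S : Finset ι) : ι → Bool := fun v => decide (v ∈ S)

lemma indSet_true {S : Finset ι} {v : ι} : indSet S v = true ↔ v ∈ S := by simp [indSet]

lemma bflip_indSet_mem {S : Finset ι} {u : ι} (h : u ∈ S) :
    bflip (indSet S) u = indSet (S.erase u) := by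
  funext v
  by_cases hv : v = u
  · subst hv; simp [bflip, indSet, h]
  · simp [bflip, indSet, Function.update_of_ne hv, hv]

lemma bflip_indSet_not_mem {S : Finset ι} {u : ι} (h : u ∉ S) :
    bflip (indSet S) u = indSet (insert u S) := by
  funext v
  by_cases hv : v = u
  · subst hv; simp [bflip, indSet, h]
  · simp [bflip, indSet, Function.update_of_ne hv, hv]

lemma bflipS_zero (B : Finset ι) : bflipS (fun _ => false) B = indSet B := by
  funext v
  by_cases hv : v ∈ B <;> simp [bflipS, indSet, hv]

lemma card_le_sensAt (f : (ι → Bool) → Bool) (x : ι → Bool) (S : Finset ι)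
    (h : ∀ v ∈ S, f (bflip x v) ≠ f x) : S.card ≤ sensAt f x :=
  Finset.card_le_card fun v hv => mem_filter.mpr ⟨mem_univ v, h v hv⟩

lemma sensAt_le_sens (f : (ι → Bool) → Bool) (x : ι → Bool) : sensAt f x ≤ sens f :=
  Finset.le_sup (mem_univ x)

/-- A Turán-type greedy independent set lemma. -/
lemma turan_indep {V : Type*} [DecidableEq V] (adj : V → V → Prop) [DecidableRel adj]
    (hsym : ∀ i j, adj i j → adj j i) (B : ℕ)
    (hdeg : ∀ R : Finset V, R.Nonempty → ∃ i ∈ R, ¬ adj i i ∧ (R.filter (adj i)).card ≤ B) :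
    ∀ (m : ℕ) (R : Finset V), R.card ≤ m →
      ∃ I : Finset V, I ⊆ R ∧ (∀ i ∈ I, ∀ j ∈ I, ¬ adj i j) ∧ R.card ≤ I.card * (B + 1) := by
  intro m
  induction m with
  | zero =>
    intro R hR
    exact ⟨∅, empty_subset _, by simp, by simpa using hR⟩
  | succ m ih =>
    intro R hR
    rcases R.eq_empty_or_nonempty with rfl | hne
    · exact ⟨∅, empty_subset _, by simp, by simp⟩
    obtain ⟨i, hiR, hirr, hdi⟩ := hdeg R hne
    set R' := (R.erase i).filter (fun j => ¬ adj i j) with hR'def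
    have hR'card : R'.card ≤ m := by
      have h1 : R'.card ≤ (R.erase i).card := card_le_card (filter_subset _ _)
      have h2 := Finset.card_erase_of_mem hiR
      have h3 := Finset.card_pos.mpr hne
      omega
    obtain ⟨I', hI'sub, hI'ind, hI'card⟩ := ih R' hR'card
    have hiI' : i ∉ I' := fun h => (Finset.notMem_erase i R) (mem_of_mem_filter _ (hI'sub h))
    refine ⟨insert i I', ?_, ?_, ?_⟩
    · intro j hj
      rcases Finset.mem_insert.mp hj with rfl | hj
      · exact hiR
      · exact (Finset.erase_subset _ _) (mem_of_mem_filter _ (hI'sub hj))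
    · intro a ha b hb
      rcases Finset.mem_insert.mp ha with ha1 | ha1
      · rcases Finset.mem_insert.mp hb with hb1 | hb1
        · subst ha1; subst hb1; exact hirr
        · subst ha1; exact (Finset.mem_filter.mp (hI'sub hb1)).2
      · rcases Finset.mem_insert.mp hb with hb1 | hb1
        · subst hb1; exact fun h => (Finset.mem_filter.mp (hI'sub ha1)).2 (hsym _ _ h)
        · exact hI'ind a ha1 b hb1
    · have hsub : R ⊆ insert i (R' ∪ R.filter (adj i)) := by
        intro j hj
        by_cases hji : j = i
        · simp [hji]
        · by_cases hadj : adj i j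
          · exact Finset.mem_insert_of_mem (Finset.mem_union_right _ (mem_filter.mpr ⟨hj, hadj⟩))
          · exact Finset.mem_insert_of_mem (Finset.mem_union_left _
              (mem_filter.mpr ⟨Finset.mem_erase.mpr ⟨hji, hj⟩, hadj⟩))
      have h1 := card_le_card hsub
      have h2 := Finset.card_insert_le i (R' ∪ R.filter (adj i))
      have h3 := Finset.card_union_le R' (R.filter (adj i))
      have h4 : (insert i I').card = I'.card + 1 := Finset.card_insert_of_notMem hiI'
      nlinarith [hI'card]

/-- The conflict relation between DNF terms. -/
abbrev conf {n w : ℕ} (T : Fin w → Finset (Fin n) × Finset (Fin n)) (i j : Fin w) : Prop :=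
  i ≠ j ∧ (((T j).1 ∩ (T i).2) ≠ ∅ ∨ ((T i).1 ∩ (T j).2) ≠ ∅)

theorem bs_le_four_sens_sq {n w : ℕ} (f : (Fin n → Bool) → Bool)
    (T : Fin w → Finset (Fin n) × Finset (Fin n))
    (hterm : ∀ i, Disjoint (T i).1 (T i).2)
    (hf : ∀ x, f x = true ↔ ∃ i, TermTrue (T i) x)
    (h0 : f (fun _ => false) = false)
    (hnr : ∀ i, ∃ x, TermTrue (T i) x ∧ ∀ j, j ≠ i → ¬ TermTrue (T j) x)
    (hblock : ∀ i j, i ≠ j → Disjoint (T i).1 (T j).1)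
    (hnorm : bs f = bsAt f (fun _ => false)) :
    bs f ≤ 4 * sens f ^ 2 := by
  classical
  set s := sens f with hs
  -- each positive set is nonempty
  have haceN : ∀ i, (T i).1.Nonempty := by
    intro i
    rcases Finset.eq_empty_or_nonempty (T i).1 with he | h
    · exfalso
      have : f (fun _ => false) = true := (hf _).mpr ⟨i, by simp [TermTrue, he]⟩
      rw [h0] at this
      exact Bool.noConfusion this
    · exact h
  -- truth on indicator inputs
  have htrue : ∀ S : Finset (Fin n), f (indSet S) = true ↔
      ∃ i, (T i).1 ⊆ S ∧ ∀ v ∈ (T i).2, v ∉ S := by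
    intro S
    rw [hf]
    constructor
    · rintro ⟨i, h1, h2⟩
      refine ⟨i, fun v hv => indSet_true.mp (h1 v hv), fun v hv hvS => ?_⟩
      have h3 := h2 v hv
      rw [show indSet S v = true from indSet_true.mpr hvS] at h3
      exact Bool.noConfusion h3
    · rintro ⟨i, h1, h2⟩
      refine ⟨i, fun v hv => indSet_true.mpr (h1 hv), fun v hv => ?_⟩
      have hnv : v ∉ S := h2 v hv
      simp [indSet, hnv]
  have hfA : ∀ i, f (indSet (T i).1) = true := fun i =>
    (htrue _).mpr ⟨i, subset_rfl, fun v hv hvA => (Finset.disjoint_right.mp (hterm i)) hv hvA⟩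
  have hfErase : ∀ i u, u ∈ (T i).1 → f (indSet ((T i).1.erase u)) = false := by
    intro i u hu
    cases hft : f (indSet ((T i).1.erase u)) with
    | false => rfl
    | true =>
      exfalso
      obtain ⟨t, h1, h2⟩ := (htrue _).mp hft
      by_cases hti : t = i
      · subst hti
        exact (Finset.notMem_erase u _) (h1 hu)
      · obtain ⟨v, hv⟩ := haceN t
        exact (Finset.disjoint_left.mp (hblock t i hti)) hv (Finset.erase_subset _ _ (h1 hv))
  -- the witness structure for "ready-to-fire" negative coordinates
  have hWwit : ∀ i v, v ∈ (T i).2 → f (indSet (insert v (T i).1)) = true →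
      ∃ t, (T t).1 ⊆ {v} ∧ ∀ u ∈ (T t).2, u ∉ insert v (T i).1 := by
    intro i v hv2 hvf
    obtain ⟨t, h1, h2⟩ := (htrue _).mp hvf
    by_cases hti : t = i
    · exfalso; subst hti; exact h2 v hv2 (mem_insert_self _ _)
    · refine ⟨t, ?_, h2⟩
      intro u hu
      rcases mem_insert.mp (h1 hu) with h | huA
      · exact Finset.mem_singleton.mpr h
      · exact absurd huA (fun hc => (Finset.disjoint_left.mp (hblock t i hti)) hu hc)
  -- C1 : |A_i| + |Ā_i \ W_i| ≤ s
  have hC1 : ∀ i, (T i).1.card +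
      ((T i).2.filter (fun v => ¬ f (indSet (insert v (T i).1)) = true)).card ≤ s := by
    intro i
    have hdisj : Disjoint (T i).1
        ((T i).2.filter (fun v => ¬ f (indSet (insert v (T i).1)) = true)) :=
      (hterm i).mono_right (filter_subset _ _)
    have hle : ((T i).1 ∪
        (T i).2.filter (fun v => ¬ f (indSet (insert v (T i).1)) = true)).card
        ≤ sensAt f (indSet (T i).1) := by
      apply card_le_sensAt
      intro v hv
      rcases mem_union.mp hv with hvA | hvB
      · rw [bflip_indSet_mem hvA, hfErase i v hvA, hfA i]
        simp
      · have hv2 : v ∈ (T i).2 := (mem_filter.mp hvB).1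
        have hnf : ¬ f (indSet (insert v (T i).1)) = true := (mem_filter.mp hvB).2
        have hvA : v ∉ (T i).1 := fun h => (Finset.disjoint_left.mp (hterm i)) h hv2
        rw [bflip_indSet_not_mem hvA, hfA i]
        exact hnf
    calc (T i).1.card + _ = _ := (Finset.card_union_of_disjoint hdisj).symm
      _ ≤ sensAt f (indSet (T i).1) := hle
      _ ≤ s := sensAt_le_sens f _
  -- C2 : |W_i| ≤ s
  have hC2 : ∀ i,
      ((T i).2.filter (fun v => f (indSet (insert v (T i).1)) = true)).card ≤ s := by
    intro i
    obtain ⟨u0, hu0⟩ := haceN i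
    have hx : f (indSet ((T i).1.erase u0)) = false := hfErase i u0 hu0
    have hle : ((T i).2.filter (fun v => f (indSet (insert v (T i).1)) = true)).card
        ≤ sensAt f (indSet ((T i).1.erase u0)) := by
      apply card_le_sensAt
      intro v hv
      have hv2 : v ∈ (T i).2 := (mem_filter.mp hv).1
      have hvf : f (indSet (insert v (T i).1)) = true := (mem_filter.mp hv).2
      have hvA : v ∉ (T i).1 := fun h => (Finset.disjoint_left.mp (hterm i)) h hv2
      have hvE : v ∉ (T i).1.erase u0 := fun h => hvA (Finset.erase_subset _ _ h)
      rw [bflip_indSet_not_mem hvE, hx]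
      obtain ⟨t, ht1, ht2⟩ := hWwit i v hv2 hvf
      have htt : f (indSet (insert v ((T i).1.erase u0))) = true := by
        apply (htrue _).mpr
        refine ⟨t, ?_, ?_⟩
        · intro u hu
          have h := Finset.mem_singleton.mp (ht1 hu)
          subst h
          exact mem_insert_self _ _
        · intro u hu huIn
          apply ht2 u hu
          rcases mem_insert.mp huIn with h | h
          · subst h; exact mem_insert_self _ _
          · exact mem_insert_of_mem (Finset.erase_subset _ _ h)
      rw [htt]
      simp
    exact hle.trans (sensAt_le_sens f _)
  -- |Ā_i| + |A_i| ≤ 2s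
  have hN : ∀ i, (T i).2.card + (T i).1.card ≤ 2 * s := by
    intro i
    have hsplit : ((T i).2.filter (fun v => f (indSet (insert v (T i).1)) = true)).card
        + ((T i).2.filter (fun v => ¬ f (indSet (insert v (T i).1)) = true)).card
        = (T i).2.card := Finset.card_filter_add_card_filter_not _
    have h1 := hC1 i
    have h2 := hC2 i
    omega
  -- out-degree bound
  have hod : ∀ (i : Fin w) (R : Finset (Fin w)),
      (R.filter (fun j => j ≠ i ∧ ((T j).1 ∩ (T i).2) ≠ ∅)).card ≤ (T i).2.card := by
    intro i R
    apply Finset.card_le_card_of_injOn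
      (fun j => if h : ((T j).1 ∩ (T i).2) = ∅ then (haceN i).choose
        else (Finset.nonempty_iff_ne_empty.mpr h).choose)
    · intro j hj
      have hj' := (mem_filter.mp hj).2.2
      simp only [dif_neg hj']
      exact (Finset.mem_inter.mp (Finset.nonempty_iff_ne_empty.mpr hj').choose_spec).2
    · intro j1 hj1 j2 hj2 heq
      have h1 := (mem_filter.mp (Finset.mem_coe.mp hj1)).2.2
      have h2 := (mem_filter.mp (Finset.mem_coe.mp hj2)).2.2
      dsimp only at heq
      rw [dif_neg h1, dif_neg h2] at heq
      by_contra hne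
      have e1 := (Finset.mem_inter.mp (Finset.nonempty_iff_ne_empty.mpr h1).choose_spec).1
      have e2 := (Finset.mem_inter.mp (Finset.nonempty_iff_ne_empty.mpr h2).choose_spec).1
      exact (Finset.disjoint_left.mp (hblock j1 j2 hne)) (heq ▸ e1) e2
  -- degree condition for the greedy lemma
  have hdeg : ∀ R : Finset (Fin w), R.Nonempty →
      ∃ i ∈ R, ¬ conf T i i ∧ (R.filter (conf T i)).card ≤ 2 * (2 * s - 1) := by
    intro R hne
    have hirr : ∀ i : Fin w, ¬ conf T i i := fun i h => h.1 rfl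
    have hout : ∀ i : Fin w,
        (R.filter (fun j => j ≠ i ∧ ((T j).1 ∩ (T i).2) ≠ ∅)).card ≤ 2 * s - 1 := by
      intro i
      have h1 := hod i R
      have h2 := hN i
      have h3 : 1 ≤ (T i).1.card := Finset.card_pos.mpr (haceN i)
      omega
    have hsplit : ∀ i, (R.filter (conf T i)).card ≤
        (R.filter (fun j => j ≠ i ∧ ((T j).1 ∩ (T i).2) ≠ ∅)).card
        + (R.filter (fun j => j ≠ i ∧ ((T i).1 ∩ (T j).2) ≠ ∅)).card := by
      intro i
      have hsub : R.filter (conf T i) ⊆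
          (R.filter (fun j => j ≠ i ∧ ((T j).1 ∩ (T i).2) ≠ ∅))
          ∪ (R.filter (fun j => j ≠ i ∧ ((T i).1 ∩ (T j).2) ≠ ∅)) := by
        intro j hj
        have hjR := (mem_filter.mp hj).1
        have hc := (mem_filter.mp hj).2
        rcases hc.2 with h | h
        · exact mem_union_left _ (mem_filter.mpr ⟨hjR, hc.1.symm, h⟩)
        · exact mem_union_right _ (mem_filter.mpr ⟨hjR, hc.1.symm, h⟩)
      exact (card_le_card hsub).trans (Finset.card_union_le _ _)
    have hswap : ∑ i ∈ R, (R.filter (fun j => j ≠ i ∧ ((T i).1 ∩ (T j).2) ≠ ∅)).card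
        = ∑ i ∈ R, (R.filter (fun j => j ≠ i ∧ ((T j).1 ∩ (T i).2) ≠ ∅)).card := by
      simp only [Finset.card_filter]
      rw [Finset.sum_comm]
      refine Finset.sum_congr rfl fun x _ => Finset.sum_congr rfl fun y _ => ?_
      exact if_congr (and_congr ne_comm Iff.rfl) rfl rfl
    have hsum : ∑ i ∈ R, (R.filter (conf T i)).card ≤ R.card * (2 * (2 * s - 1)) := by
      calc ∑ i ∈ R, (R.filter (conf T i)).card
          ≤ ∑ i ∈ R, ((R.filter (fun j => j ≠ i ∧ ((T j).1 ∩ (T i).2) ≠ ∅)).card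
            + (R.filter (fun j => j ≠ i ∧ ((T i).1 ∩ (T j).2) ≠ ∅)).card) :=
            Finset.sum_le_sum fun i _ => hsplit i
        _ = ∑ i ∈ R, (R.filter (fun j => j ≠ i ∧ ((T j).1 ∩ (T i).2) ≠ ∅)).card
            + ∑ i ∈ R, (R.filter (fun j => j ≠ i ∧ ((T i).1 ∩ (T j).2) ≠ ∅)).card :=
            Finset.sum_add_distrib
        _ = 2 * ∑ i ∈ R, (R.filter (fun j => j ≠ i ∧ ((T j).1 ∩ (T i).2) ≠ ∅)).card := by
            rw [hswap]; ring
        _ ≤ 2 * (R.card * (2 * s - 1)) := by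
            apply Nat.mul_le_mul_left
            calc ∑ i ∈ R, (R.filter (fun j => j ≠ i ∧ ((T j).1 ∩ (T i).2) ≠ ∅)).card
                ≤ ∑ _i ∈ R, (2 * s - 1) := Finset.sum_le_sum fun i _ => hout i
              _ = R.card * (2 * s - 1) := by rw [Finset.sum_const, smul_eq_mul]
        _ = R.card * (2 * (2 * s - 1)) := by ring
    by_contra hcon
    push_neg at hcon
    have hall : ∀ i ∈ R, 2 * (2 * s - 1) + 1 ≤ (R.filter (conf T i)).card := by
      intro i hi
      have := hcon i hi (hirr i)
      omega
    have hge := Finset.card_nsmul_le_sum R _ _ hall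
    rw [smul_eq_mul] at hge
    have hRpos : 0 < R.card := Finset.card_pos.mpr hne
    nlinarith [hsum]
  have hsym : ∀ i j, conf T i j → conf T j i := by
    rintro i j ⟨h1, h2⟩
    exact ⟨h1.symm, h2.symm⟩
  obtain ⟨I, hIsub, hIind, hIcard⟩ :=
    turan_indep (conf T) hsym (2 * (2 * s - 1)) hdeg (univ.card) univ le_rfl
  -- |I| ≤ s via the sensitive 0-point
  have hIle : I.card ≤ s := by
    have haA : ∀ j, (haceN j).choose ∈ (T j).1 := fun j => (haceN j).choose_spec
    have haU : ∀ j ∈ I, (haceN j).choose ∉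
        I.biUnion (fun k => (T k).1.erase ((haceN k).choose)) := by
      intro j hj hmem
      obtain ⟨k, hkI, hk⟩ := Finset.mem_biUnion.mp hmem
      have hk1 := Finset.mem_erase.mp hk
      by_cases hkj : k = j
      · subst hkj; exact hk1.1 rfl
      · exact (Finset.disjoint_left.mp (hblock j k (fun h => hkj h.symm))) (haA j) hk1.2
    have hUf : f (indSet (I.biUnion (fun k => (T k).1.erase ((haceN k).choose)))) = false := by
      cases hft : f (indSet (I.biUnion (fun k => (T k).1.erase ((haceN k).choose)))) with
      | false => rfl
      | true =>
        exfalso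
        obtain ⟨t, h1, h2⟩ := (htrue _).mp hft
        by_cases htI : t ∈ I
        · exact haU t htI (h1 (haA t))
        · obtain ⟨v, hv⟩ := haceN t
          obtain ⟨k, hkI, hk⟩ := Finset.mem_biUnion.mp (h1 hv)
          have hkt : k ≠ t := fun h => htI (h ▸ hkI)
          exact (Finset.disjoint_left.mp (hblock t k (fun h => hkt h.symm))) hv
            (Finset.mem_erase.mp hk).2
    have hflip : ∀ j ∈ I,
        f (bflip (indSet (I.biUnion (fun k => (T k).1.erase ((haceN k).choose))))
          ((haceN j).choose)) = true := by
      intro j hj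
      rw [bflip_indSet_not_mem (haU j hj)]
      apply (htrue _).mpr
      refine ⟨j, ?_, ?_⟩
      · intro v hv
        by_cases hva : v = (haceN j).choose
        · subst hva; exact mem_insert_self _ _
        · exact mem_insert_of_mem
            (Finset.mem_biUnion.mpr ⟨j, hj, Finset.mem_erase.mpr ⟨hva, hv⟩⟩)
      · intro u hu huIn
        rcases mem_insert.mp huIn with h | hUmem
        · subst h; exact (Finset.disjoint_left.mp (hterm j)) (haA j) hu
        · obtain ⟨k, hkI, hk⟩ := Finset.mem_biUnion.mp hUmem
          have hkA : u ∈ (T k).1 := (Finset.mem_erase.mp hk).2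
          by_cases hkj : k = j
          · subst hkj; exact (Finset.disjoint_left.mp (hterm k)) hkA hu
          · apply hIind j hj k hkI
            refine ⟨fun h => hkj h.symm, Or.inl ?_⟩
            intro hemp
            have hmm : u ∈ (T k).1 ∩ (T j).2 := Finset.mem_inter.mpr ⟨hkA, hu⟩
            rw [hemp] at hmm
            exact absurd hmm (Finset.notMem_empty u)
    have hcardle : (I.image (fun j => (haceN j).choose)).card
        ≤ sensAt f (indSet (I.biUnion (fun k => (T k).1.erase ((haceN k).choose)))) := by
      apply card_le_sensAt
      intro v hv
      obtain ⟨j, hj, rfl⟩ := Finset.mem_image.mp hv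
      rw [hflip j hj, hUf]
      simp
    have himg : (I.image (fun j => (haceN j).choose)).card = I.card := by
      apply Finset.card_image_of_injOn
      intro j1 _ j2 _ heq
      dsimp only at heq
      by_contra hne'
      exact (Finset.disjoint_left.mp (hblock j1 j2 hne')) (haA j1) (heq ▸ haA j2)
    calc I.card = (I.image (fun j => (haceN j).choose)).card := himg.symm
      _ ≤ _ := hcardle
      _ ≤ s := sensAt_le_sens f _
  -- block sensitivity at 0 is at most w
  have hbs : bs f ≤ w := by
    rw [hnorm]
    unfold bsAt
    apply csSup_le
    · exact ⟨0, Fin.elim0, fun i => i.elim0, fun j => j.elim0⟩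
    · intro k hk
      obtain ⟨Bk, hdisj, hsens⟩ := hk
      have hft : ∀ j : Fin k, f (indSet (Bk j)) = true := by
        intro j
        have hj := hsens j
        rw [bflipS_zero, h0] at hj
        cases hfv : f (indSet (Bk j)) with
        | true => rfl
        | false => exact absurd hfv hj
      have hchoice : ∀ j : Fin k, ∃ i, (T i).1 ⊆ Bk j := by
        intro j
        obtain ⟨i, h1, _⟩ := (htrue _).mp (hft j)
        exact ⟨i, h1⟩
      choose g hg using hchoice
      have hginj : Function.Injective g := by
        intro j1 j2 heq
        by_contra hne'
        obtain ⟨v, hv⟩ := haceN (g j1)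
        exact (Finset.disjoint_left.mp (hdisj j1 j2 hne')) (hg j1 hv) (hg j2 (heq ▸ hv))
      calc k = Fintype.card (Fin k) := (Fintype.card_fin k).symm
        _ ≤ Fintype.card (Fin w) := Fintype.card_le_of_injective g hginj
        _ = w := Fintype.card_fin w
  -- assemble
  rcases Nat.eq_zero_or_pos w with hw | hw
  · exact hbs.trans (by rw [hw]; exact Nat.zero_le _)
  · have hs1 : 1 ≤ s := by
      have h1 := hC1 (⟨0, hw⟩ : Fin w)
      have h2 := Finset.card_pos.mpr (haceN (⟨0, hw⟩ : Fin w))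
      omega
    have huniv : (univ : Finset (Fin w)).card = w := by simp
    have h1 : w ≤ I.card * (2 * (2 * s - 1) + 1) := by simpa using hIcard
    have h2 : 2 * (2 * s - 1) + 1 ≤ 4 * s := by omega
    calc bs f ≤ w := hbs
      _ ≤ I.card * (2 * (2 * s - 1) + 1) := h1
      _ ≤ s * (4 * s) := Nat.mul_le_mul hIle h2
      _ = 4 * s ^ 2 := by ring
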